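/- For every δ ∈ (0, 1/8) there exists K₀ > 0 such that the following holds for every K ≥ K₀. Let (X, d) be a finite metric space and r > 0 such that (P1) for every s ∈ ℝ all closed balls of radius s in X have the same cardinality, denoted vol(s). Suppose there exists t ∈ (0, r) such that (P2) vol(r−t) ≤ e^{−K}·vol(r), and (P3) for all a, b ∈ X with r−t < d(a,b) ≤ r one has |B(a,r) ∩ B(b,r)| ≤ e^{−K}·vol(r). Then there exists a subset C ⊆ X with d(c, c') > r for all distinct c, c' ∈ C and |C| ≥ (1−δ)·K·|X|/vol(r); moreover, the number of subsets C ⊆ X with all pairwise distances greater than r is at least exp((1/8 − δ)·K²·|X|/vol(r)). -/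

import Mathlib

open Finset

namespace Stmt2Aux

open scoped Classical
set_option linter.unusedSectionVars false

variable {X : Type} [MetricSpace X] [Fintype X]

/-- the code condition, matching the goal -/
def code (r : ℝ) (C : Finset X) : Prop := ∀ c ∈ C, ∀ c' ∈ C, c ≠ c' → r < dist c c'

/-- closed ball as a finset -/
noncomputable def Bal (r : ℝ) (v : X) : Finset X := univ.filter (fun x => dist x v ≤ r)

lemma mem_Bal {r : ℝ} {v x : X} : x ∈ Bal r v ↔ dist x v ≤ r := by
  simp [Bal]

noncomputable def codes (r : ℝ) (S : Finset X) : Finset (Finset X) :=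
  S.powerset.filter (code r)

lemma mem_codes {r : ℝ} {S C : Finset X} : C ∈ codes r S ↔ C ⊆ S ∧ code r C := by
  simp [codes]

/-- partition function -/
noncomputable def Z (r q : ℝ) (S : Finset X) : ℝ := ∑ C ∈ codes r S, q ^ C.card

lemma code_mono {r : ℝ} {C D : Finset X} (h : C ⊆ D) (hD : code r D) : code r C :=
  fun c hc c' hc' hne => hD c (h hc) c' (h hc') hne

lemma code_empty (r : ℝ) : code r (∅ : Finset X) := by simp [code]

lemma one_le_Z {r q : ℝ} (hq : 0 ≤ q) (S : Finset X) : 1 ≤ Z r q S := by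
  have hemp : (∅ : Finset X) ∈ codes r S := by
    simp [mem_codes, code_empty]
  have := Finset.single_le_sum (f := fun C : Finset X => q ^ C.card)
    (fun C _ => pow_nonneg hq _) hemp
  simpa [Z] using this

lemma Z_pos {r q : ℝ} (hq : 0 ≤ q) (S : Finset X) : 0 < Z r q S :=
  lt_of_lt_of_le one_pos (one_le_Z hq S)

lemma Z_nonneg {r q : ℝ} (hq : 0 ≤ q) (S : Finset X) : 0 ≤ Z r q S := (Z_pos hq S).le

lemma Z_mono {r q : ℝ} (hq : 0 ≤ q) {S T : Finset X} (h : S ⊆ T) : Z r q S ≤ Z r q T := by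
  apply Finset.sum_le_sum_of_subset_of_nonneg
  · intro C hC
    rw [mem_codes] at hC ⊢
    exact ⟨hC.1.trans h, hC.2⟩
  · intro C _ _
    exact pow_nonneg hq _


lemma notmem_Bal_of_code {r : ℝ} {C : Finset X} (hC : code r C) {u w : X} (hu : u ∈ C)
    (hw : w ∈ C) (hne : w ≠ u) : w ∉ Bal r u := by
  rw [mem_Bal, not_le]
  exact hC w hw u hu hne

/-- key identity: sum over codes containing u -/
lemma sum_codes_mem (r : ℝ) (hr : 0 ≤ r) (q : ℝ) {S : Finset X} {u : X} (hu : u ∈ S) :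
    ∑ M ∈ (codes r S).filter (fun M => u ∈ M), q ^ M.card
      = q * Z r q (S \ Bal r u) := by
  rw [Z, Finset.mul_sum]
  refine Finset.sum_bij' (fun M _ => M.erase u) (fun D _ => insert u D) ?_ ?_ ?_ ?_ ?_
  · intro M hM
    rw [Finset.mem_filter, mem_codes] at hM
    obtain ⟨⟨hMS, hMcode⟩, huM⟩ := hM
    rw [mem_codes]
    constructor
    · intro w hw
      rw [Finset.mem_erase] at hw
      rw [Finset.mem_sdiff]
      exact ⟨hMS hw.2, notmem_Bal_of_code hMcode huM hw.2 hw.1⟩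
    · exact code_mono (Finset.erase_subset _ _) hMcode
  · intro D hD
    rw [mem_codes] at hD
    obtain ⟨hDS, hDcode⟩ := hD
    have huD : u ∉ D := by
      intro h
      have := hDS h
      rw [Finset.mem_sdiff] at this
      exact this.2 (by rw [mem_Bal]; simpa using hr)
    rw [Finset.mem_filter, mem_codes]
    refine ⟨⟨?_, ?_⟩, Finset.mem_insert_self _ _⟩
    · intro w hw
      rcases Finset.mem_insert.mp hw with h | h
      · exact h ▸ hu
      · exact ((Finset.mem_sdiff.mp (hDS h)).1)
    · intro c hc c' hc' hne
      rcases Finset.mem_insert.mp hc with h1 | h1 <;> rcases Finset.mem_insert.mp hc' with h2 | h2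
      · exact absurd (h1.trans h2.symm) hne
      · have : c' ∉ Bal r u := (Finset.mem_sdiff.mp (hDS h2)).2
        rw [mem_Bal, not_le] at this
        rw [h1, dist_comm]
        exact this
      · have : c ∉ Bal r u := (Finset.mem_sdiff.mp (hDS h1)).2
        rw [mem_Bal, not_le] at this
        rw [h2]
        exact this
      · exact hDcode c h1 c' h2 hne
  · intro M hM
    rw [Finset.mem_filter] at hM
    exact Finset.insert_erase hM.2
  · intro D hD
    rw [mem_codes] at hD
    have huD : u ∉ D := by
      intro h
      have := hD.1 h
      rw [Finset.mem_sdiff] at this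
      exact this.2 (by rw [mem_Bal]; simpa using hr)
    exact Finset.erase_insert huD
  · intro M hM
    rw [Finset.mem_filter] at hM
    have : (M.erase u).card + 1 = M.card := Finset.card_erase_add_one hM.2
    rw [← this, pow_succ]
    ring

/-- split identity -/
lemma Z_split (r : ℝ) (hr : 0 ≤ r) (q : ℝ) {S : Finset X} {u : X} (hu : u ∈ S) :
    Z r q S = Z r q (S.erase u) + q * Z r q (S \ Bal r u) := by
  rw [← sum_codes_mem r hr q hu]
  have hsplit : codes r (S.erase u) = (codes r S).filter (fun M => u ∉ M) := by
    ext C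
    simp only [mem_codes, Finset.mem_filter, Finset.subset_erase]
    tauto
  conv_lhs => rw [Z]
  rw [show Z r q (S.erase u) = ∑ C ∈ codes r (S.erase u), q ^ C.card from rfl, hsplit, add_comm]
  exact (Finset.sum_filter_add_sum_filter_not (codes r S) (fun M => u ∈ M) _).symm

/-- removing a vertex decreases Z by at most a factor (1+q) -/
lemma Z_le_erase (r : ℝ) (hr : 0 ≤ r) {q : ℝ} (hq : 0 ≤ q) {S : Finset X} {u : X} (hu : u ∈ S) :
    Z r q S ≤ (1 + q) * Z r q (S.erase u) := by
  rw [Z_split r hr q hu, add_mul, one_mul]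
  have h1 : Z r q (S \ Bal r u) ≤ Z r q (S.erase u) := by
    apply Z_mono hq
    intro w hw
    rw [Finset.mem_sdiff] at hw
    rw [Finset.mem_erase]
    refine ⟨?_, hw.1⟩
    intro h
    exact hw.2 (by rw [h, mem_Bal]; simpa using hr)
  have := mul_le_mul_of_nonneg_left h1 hq
  linarith

/-- removing a set decreases Z by at most (1+q)^|T| -/
lemma Z_le_sdiff (r : ℝ) (hr : 0 ≤ r) {q : ℝ} (hq : 0 ≤ q) (S : Finset X) (T : Finset X) :
    Z r q S ≤ (1 + q) ^ T.card * Z r q (S \ T) := by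
  classical
  induction T using Finset.induction_on generalizing S with
  | empty => simp
  | @insert a T ha ih =>
    rw [Finset.card_insert_of_notMem ha]
    by_cases haS : a ∈ S
    · calc Z r q S ≤ (1 + q) * Z r q (S.erase a) := Z_le_erase r hr hq haS
        _ ≤ (1 + q) * ((1 + q) ^ T.card * Z r q (S.erase a \ T)) := by
            apply mul_le_mul_of_nonneg_left (ih _)
            linarith
        _ = (1 + q) ^ (T.card + 1) * Z r q (S \ insert a T) := by
            rw [Finset.erase_sdiff_comm, Finset.sdiff_insert]
            ring
    · have : S \ insert a T = S \ T := by
        rw [Finset.sdiff_insert, Finset.erase_eq_of_notMem]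
        intro h
        exact haS (Finset.mem_sdiff.mp h).1
      rw [this]
      calc Z r q S ≤ (1 + q) ^ T.card * Z r q (S \ T) := ih _
        _ ≤ (1 + q) ^ (T.card + 1) * Z r q (S \ T) := by
            apply mul_le_mul_of_nonneg_right _ (Z_nonneg hq _)
            rw [pow_succ]
            nlinarith [pow_nonneg (by linarith : (0:ℝ) ≤ 1 + q) T.card, pow_pos (by linarith : (0:ℝ) < 1+q) T.card]

lemma Z_le_one_add_pow (r : ℝ) (hr : 0 ≤ r) {q : ℝ} (hq : 0 ≤ q) (S : Finset X) :
    Z r q S ≤ (1 + q) ^ S.card := by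
  have := Z_le_sdiff r hr hq S S
  rw [Finset.sdiff_self] at this
  have hZ : Z r q (∅ : Finset X) = 1 := by
    have h1 : codes r (∅ : Finset X) = {∅} := by
      ext C
      simp only [mem_codes, Finset.mem_singleton]
      constructor
      · intro ⟨h1, _⟩
        exact Finset.subset_empty.mp h1
      · rintro rfl
        exact ⟨Finset.empty_subset _, code_empty r⟩
    rw [Z, h1]
    simp
  rw [hZ, mul_one] at this
  exact this

/-- real-exponent version -/
lemma Z_le_sdiff_rpow (r : ℝ) (hr : 0 ≤ r) {q : ℝ} (hq : 0 ≤ q) (S T : Finset X) {g : ℝ}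
    (hg : (T.card : ℝ) ≤ g) :
    Z r q S ≤ (1 + q) ^ g * Z r q (S \ T) := by
  calc Z r q S ≤ (1 + q) ^ T.card * Z r q (S \ T) := Z_le_sdiff r hr hq S T
    _ ≤ (1 + q) ^ g * Z r q (S \ T) := by
        apply mul_le_mul_of_nonneg_right _ (Z_nonneg hq _)
        rw [← Real.rpow_natCast (1 + q) T.card]
        exact Real.rpow_le_rpow_of_exponent_le (by linarith) hg


/-- uncovered part of the ball of v, given external configuration J -/
noncomputable def Fv (r : ℝ) (v : X) (J : Finset X) : Finset X :=
  (Bal r v).filter (fun u => ∀ w ∈ J, r < dist u w)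

lemma mem_Fv {r : ℝ} {v u : X} {J : Finset X} :
    u ∈ Fv r v J ↔ dist u v ≤ r ∧ ∀ w ∈ J, r < dist u w := by
  simp [Fv, mem_Bal]

lemma Fv_subset {r : ℝ} {v : X} {J : Finset X} : Fv r v J ⊆ Bal r v :=
  Finset.filter_subset _ _

/-- master decomposition: conditioning on the configuration outside `Bal r v` -/
lemma master (r : ℝ) (v : X) (F : Finset X → Finset X → ℝ) :
    ∑ C ∈ codes r (univ : Finset X), F (C \ Bal r v) (C ∩ Bal r v)
      = ∑ J ∈ codes r (univ \ Bal r v), ∑ M ∈ codes r (Fv r v J), F J M := by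
  have hstep : ∀ J, (∑ M ∈ codes r (Fv r v J), F J M)
      = ∑ M ∈ codes r (Bal r v), if M ⊆ Fv r v J then F J M else 0 := by
    intro J
    rw [← Finset.sum_filter]
    congr 1
    ext M
    simp only [mem_codes, Finset.mem_filter]
    constructor
    · intro ⟨h1, h2⟩
      exact ⟨⟨h1.trans Fv_subset, h2⟩, h1⟩
    · intro ⟨⟨_, h2⟩, h3⟩
      exact ⟨h3, h2⟩
  have hrw : (∑ J ∈ codes r (univ \ Bal r v), ∑ M ∈ codes r (Fv r v J), F J M)
      = ∑ p ∈ ((codes r (univ \ Bal r v)) ×ˢ (codes r (Bal r v))).filter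
          (fun p => p.2 ⊆ Fv r v p.1), F p.1 p.2 := by
    rw [Finset.sum_filter, Finset.sum_product]
    exact Finset.sum_congr rfl (fun J _ => hstep J)
  rw [hrw]
  apply Finset.sum_bij' (i := fun C _ => (C \ Bal r v, C ∩ Bal r v))
    (j := fun p _ => p.1 ∪ p.2)
  · intro C hC
    rw [mem_codes] at hC
    rw [Finset.mem_filter, Finset.mem_product]
    refine ⟨⟨?_, ?_⟩, ?_⟩
    · rw [mem_codes]
      exact ⟨Finset.sdiff_subset_sdiff (Finset.subset_univ C) (le_refl _),
        code_mono Finset.sdiff_subset hC.2⟩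
    · rw [mem_codes]
      exact ⟨Finset.inter_subset_right, code_mono Finset.inter_subset_left hC.2⟩
    · intro u hu
      rw [Finset.mem_inter] at hu
      rw [mem_Fv]
      refine ⟨(mem_Bal).mp hu.2, ?_⟩
      intro w hw
      rw [Finset.mem_sdiff] at hw
      have hne : u ≠ w := by
        intro h
        exact hw.2 (h ▸ hu.2)
      exact hC.2 u hu.1 w hw.1 hne
  · intro p hp
    rw [Finset.mem_filter, Finset.mem_product] at hp
    obtain ⟨⟨hJ, hM⟩, hsub⟩ := hp
    rw [mem_codes] at hJ hM ⊢
    refine ⟨Finset.subset_univ _, ?_⟩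
    intro c hc c' hc' hne
    rcases Finset.mem_union.mp hc with h1 | h1 <;> rcases Finset.mem_union.mp hc' with h2 | h2
    · exact hJ.2 c h1 c' h2 hne
    · have := (mem_Fv.mp (hsub h2)).2 c h1
      rwa [dist_comm]
    · exact (mem_Fv.mp (hsub h1)).2 c' h2
    · exact hM.2 c h1 c' h2 hne
  · intro C _
    exact Finset.sdiff_union_inter C (Bal r v)
  · intro p hp
    rw [Finset.mem_filter, Finset.mem_product] at hp
    obtain ⟨⟨hJ, _⟩, hsub⟩ := hp
    rw [mem_codes] at hJ
    have hJB : ∀ x ∈ p.1, x ∉ Bal r v := by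
      intro x hx
      exact (Finset.mem_sdiff.mp (hJ.1 hx)).2
    have hMB : ∀ x ∈ p.2, x ∈ Bal r v := fun x hx => Fv_subset (hsub hx)
    have h1 : (p.1 ∪ p.2) \ Bal r v = p.1 := by
      ext x
      simp only [Finset.mem_sdiff, Finset.mem_union]
      constructor
      · rintro ⟨h | h, hB⟩
        · exact h
        · exact absurd (hMB x h) hB
      · intro h
        exact ⟨Or.inl h, hJB x h⟩
    have h2 : (p.1 ∪ p.2) ∩ Bal r v = p.2 := by
      ext x
      simp only [Finset.mem_inter, Finset.mem_union]
      constructor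
      · rintro ⟨h | h, hB⟩
        · exact absurd hB (hJB x h)
        · exact h
      · intro h
        exact ⟨Or.inr h, hMB x h⟩
    exact Prod.ext h1 h2
  · intro C _
    rfl


lemma D1 (r : ℝ) (q : ℝ) (v : X) :
    Z r q (univ : Finset X)
      = ∑ J ∈ codes r (univ \ Bal r v), q ^ J.card * Z r q (Fv r v J) := by
  have := master (X := X) r v (fun J M => q ^ J.card * q ^ M.card)
  have hL : (∑ C ∈ codes r (univ : Finset X),
      q ^ (C \ Bal r v).card * q ^ (C ∩ Bal r v).card) = Z r q (univ : Finset X) := by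
    apply Finset.sum_congr rfl
    intro C _
    rw [← pow_add, Finset.card_sdiff_add_card_inter]
  rw [hL] at this
  rw [this]
  apply Finset.sum_congr rfl
  intro J _
  rw [Z, Finset.mul_sum]

lemma D3 (r : ℝ) (hr : 0 ≤ r) (q : ℝ) {v u : X} (hu : u ∈ Bal r v) :
    q * Z r q ((univ : Finset X) \ Bal r u)
      = ∑ J ∈ codes r (univ \ Bal r v), q ^ J.card *
          (if u ∈ Fv r v J then q * Z r q (Fv r v J \ Bal r u) else 0) := by
  have hL : q * Z r q ((univ : Finset X) \ Bal r u)
      = ∑ C ∈ codes r (univ : Finset X), (if u ∈ C then q ^ C.card else 0) := by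
    rw [← sum_codes_mem r hr q (Finset.mem_univ u), Finset.sum_filter]
  rw [hL]
  have := master (X := X) r v (fun J M => if u ∈ M then q ^ J.card * q ^ M.card else 0)
  have hL2 : (∑ C ∈ codes r (univ : Finset X),
      (if u ∈ C ∩ Bal r v then q ^ (C \ Bal r v).card * q ^ (C ∩ Bal r v).card else 0))
      = ∑ C ∈ codes r (univ : Finset X), (if u ∈ C then q ^ C.card else 0) := by
    apply Finset.sum_congr rfl
    intro C _
    rw [← pow_add, Finset.card_sdiff_add_card_inter]
    congr 1
    simp only [Finset.mem_inter, eq_iff_iff]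
    exact ⟨fun h => h.1, fun h => ⟨h, hu⟩⟩
  rw [hL2] at this
  rw [this]
  apply Finset.sum_congr rfl
  intro J _
  by_cases huF : u ∈ Fv r v J
  · rw [if_pos huF, ← sum_codes_mem r hr q huF, Finset.sum_filter, Finset.mul_sum]
    exact Finset.sum_congr rfl (fun M _ => by rw [mul_ite, mul_zero])
  · rw [if_neg huF, mul_zero]
    apply Finset.sum_eq_zero
    intro M hM
    rw [mem_codes] at hM
    rw [if_neg]
    intro huM
    exact huF (hM.1 huM)

/-- occupancy identity -/
lemma occupancy (r : ℝ) (hr : 0 ≤ r) (q : ℝ) :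
    ∑ C ∈ codes r (univ : Finset X), q ^ C.card * (C.card : ℝ)
      = ∑ u : X, q * Z r q (univ \ Bal r u) := by
  have hL : ∀ C : Finset X, q ^ C.card * (C.card : ℝ)
      = ∑ u : X, (if u ∈ C then q ^ C.card else 0) := by
    intro C
    rw [Finset.sum_ite_mem, Finset.univ_inter, Finset.sum_const]
    simp [mul_comm]
  calc ∑ C ∈ codes r (univ : Finset X), q ^ C.card * (C.card : ℝ)
      = ∑ C ∈ codes r (univ : Finset X), ∑ u : X, (if u ∈ C then q ^ C.card else 0) :=
        Finset.sum_congr rfl (fun C _ => hL C)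
    _ = ∑ u : X, ∑ C ∈ codes r (univ : Finset X), (if u ∈ C then q ^ C.card else 0) :=
        Finset.sum_comm
    _ = ∑ u : X, q * Z r q (univ \ Bal r u) := by
        apply Finset.sum_congr rfl
        intro u _
        rw [← Finset.sum_filter, sum_codes_mem r hr q (Finset.mem_univ u)]


lemma jensen_exp {I : Type} (s : Finset I) (w a : I → ℝ) (hw : ∀ i ∈ s, 0 ≤ w i)
    (hpos : 0 < ∑ i ∈ s, w i) :
    (∑ i ∈ s, w i) * Real.exp ((∑ i ∈ s, w i * a i) / ∑ i ∈ s, w i)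
      ≤ ∑ i ∈ s, w i * Real.exp (a i) := by
  have h := convexOn_exp.map_centerMass_le (t := s) (w := w) (p := a) hw hpos
    (fun i _ => Set.mem_univ _)
  rw [Finset.centerMass, Finset.centerMass] at h
  simp only [smul_eq_mul, Function.comp] at h
  rw [div_eq_inv_mul]
  calc (∑ i ∈ s, w i) * Real.exp ((∑ i ∈ s, w i)⁻¹ * ∑ i ∈ s, w i * a i)
      ≤ (∑ i ∈ s, w i) * ((∑ i ∈ s, w i)⁻¹ * ∑ i ∈ s, w i * Real.exp (a i)) :=
        mul_le_mul_of_nonneg_left h hpos.le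
    _ = ∑ i ∈ s, w i * Real.exp (a i) := by
        field_simp

noncomputable def Esum (r q : ℝ) (X : Type) [MetricSpace X] [Fintype X] : ℝ :=
  ∑ C ∈ codes r (univ : Finset X), q ^ C.card * (C.card : ℝ)

lemma Esum_nonneg {r q : ℝ} (hq : 0 ≤ q) : 0 ≤ Esum r q X := by
  apply Finset.sum_nonneg
  intro C _
  positivity

noncomputable def Goodset (r t : ℝ) (v : X) : Finset X :=
  (Bal r v).filter (fun u => r - t < dist u v)

/-- The core self-consistency inequality for the occupancy x = Δ·E/(n·Z). -/
lemma core (r t q g : ℝ) (hr : 0 < r) (hq : 0 < q) (hg : 0 ≤ g) [Nonempty X]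
    (Δ : ℝ)
    (hBal : ∀ v : X, ((Bal r v).card : ℝ) = Δ)
    (hvolt : ∀ v : X, ((Bal (r - t) v).card : ℝ) ≤ g)
    (hP3 : ∀ u v : X, r - t < dist u v → dist u v ≤ r →
      ((Bal r u ∩ Bal r v).card : ℝ) ≤ g) :
    q * Δ * Real.exp (-(q * g) - Real.exp (q * g)
        * (Δ * Esum r q X / ((Fintype.card X : ℝ) * Z r q (univ : Finset X))))
      ≤ Δ * Esum r q X / ((Fintype.card X : ℝ) * Z r q (univ : Finset X)) := by
  classical
  set n : ℝ := (Fintype.card X : ℝ) with hn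
  set Zt : ℝ := Z r q (univ : Finset X) with hZt
  set E : ℝ := Esum r q X with hE
  have hn1 : (1 : ℝ) ≤ n := by
    rw [hn]
    exact_mod_cast Fintype.card_pos
  have hnpos : 0 < n := lt_of_lt_of_le one_pos hn1
  have hZpos : 0 < Zt := Z_pos hq.le _
  have hEnn : 0 ≤ E := Esum_nonneg hq.le
  have hΔ1 : (1 : ℝ) ≤ Δ := by
    obtain ⟨v⟩ := ‹Nonempty X›
    rw [← hBal v]
    have : v ∈ Bal r v := by rw [mem_Bal]; simpa using hr.le
    exact_mod_cast Finset.card_pos.mpr ⟨v, this⟩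
  have hΔpos : 0 < Δ := lt_of_lt_of_le one_pos hΔ1
  set x : ℝ := Δ * E / (n * Zt) with hx
  have hxnn : 0 ≤ x := by positivity
  set Yv : X → ℝ := fun v => ∑ J ∈ codes r (univ \ Bal r v),
    q ^ J.card * Z r q (Fv r v J) * ((Fv r v J).card : ℝ) with hYv
  -- Step (i)
  have stepi : ∀ v : X, q * (Yv v - g * Zt)
      ≤ (1 + q) ^ (g : ℝ) * ∑ u ∈ Goodset r t v, q * Z r q (univ \ Bal r u) := by
    intro v
    have hper : ∀ u ∈ Goodset r t v,
        (∑ J ∈ codes r (univ \ Bal r v), q ^ J.card *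
          (if u ∈ Fv r v J then q * Z r q (Fv r v J) else 0))
        ≤ (1 + q) ^ (g : ℝ) * (q * Z r q (univ \ Bal r u)) := by
      intro u hu
      rw [Goodset, Finset.mem_filter, mem_Bal] at hu
      rw [D3 r hr.le q (by rw [mem_Bal]; exact hu.1), Finset.mul_sum]
      apply Finset.sum_le_sum
      intro J _
      by_cases huF : u ∈ Fv r v J
      · rw [if_pos huF, if_pos huF]
        have hZle : Z r q (Fv r v J) ≤ (1 + q) ^ (g : ℝ) * Z r q (Fv r v J \ Bal r u) := by
          have hT : ((Fv r v J ∩ Bal r u).card : ℝ) ≤ g := by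
            have hsub : Fv r v J ∩ Bal r u ⊆ Bal r u ∩ Bal r v := by
              intro y hy
              rw [Finset.mem_inter] at hy ⊢
              exact ⟨hy.2, Fv_subset hy.1⟩
            calc ((Fv r v J ∩ Bal r u).card : ℝ)
                ≤ ((Bal r u ∩ Bal r v).card : ℝ) := by
                  exact_mod_cast Finset.card_le_card hsub
              _ ≤ g := hP3 u v hu.2 hu.1
          have := Z_le_sdiff_rpow r hr.le hq.le (Fv r v J) (Fv r v J ∩ Bal r u) hT
          rwa [Finset.sdiff_inter_self_left] at this
        calc q ^ J.card * (q * Z r q (Fv r v J))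
            ≤ q ^ J.card * (q * ((1 + q) ^ (g : ℝ) * Z r q (Fv r v J \ Bal r u))) := by
              apply mul_le_mul_of_nonneg_left _ (pow_nonneg hq.le _)
              exact mul_le_mul_of_nonneg_left hZle hq.le
          _ = (1 + q) ^ (g : ℝ) * (q ^ J.card * (q * Z r q (Fv r v J \ Bal r u))) := by ring
      · rw [if_neg huF, if_neg huF, mul_zero, mul_zero]
    -- sum hper over u, then swap
    have hsum1 : (∑ u ∈ Goodset r t v, ∑ J ∈ codes r (univ \ Bal r v),
        q ^ J.card * (if u ∈ Fv r v J then q * Z r q (Fv r v J) else 0))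
        ≤ (1 + q) ^ (g : ℝ) * ∑ u ∈ Goodset r t v, q * Z r q (univ \ Bal r u) := by
      rw [Finset.mul_sum]
      exact Finset.sum_le_sum hper
    have hswap : (∑ u ∈ Goodset r t v, ∑ J ∈ codes r (univ \ Bal r v),
        q ^ J.card * (if u ∈ Fv r v J then q * Z r q (Fv r v J) else 0))
        = ∑ J ∈ codes r (univ \ Bal r v),
            q ^ J.card * (q * Z r q (Fv r v J)) * ((Fv r v J ∩ Goodset r t v).card : ℝ) := by
      rw [Finset.sum_comm]
      apply Finset.sum_congr rfl
      intro J _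
      simp only [mul_ite, mul_zero]
      rw [← Finset.sum_filter, Finset.filter_mem_eq_inter, Finset.sum_const,
        Finset.inter_comm, nsmul_eq_mul]
      ring
    have hcard : ∀ J ∈ codes r (univ \ Bal r v),
        q ^ J.card * (q * Z r q (Fv r v J)) * (((Fv r v J).card : ℝ) - g)
        ≤ q ^ J.card * (q * Z r q (Fv r v J)) * ((Fv r v J ∩ Goodset r t v).card : ℝ) := by
      intro J _
      apply mul_le_mul_of_nonneg_left _
        (by have := Z_nonneg (q := q) (r := r) hq.le (Fv r v J); positivity)
      have hdiff : Fv r v J \ Goodset r t v ⊆ Bal (r - t) v := by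
        intro u hu
        rw [Finset.mem_sdiff, Goodset, Finset.mem_filter] at hu
        rw [mem_Bal]
        rcases lt_or_ge (r - t) (dist u v) with h | h
        · exact absurd ⟨Fv_subset hu.1, h⟩ hu.2
        · exact h
      have h1 : ((Fv r v J).card : ℝ) - ((Fv r v J ∩ Goodset r t v).card : ℝ)
          ≤ g := by
        have hc : ((Fv r v J) \ Goodset r t v).card + (Fv r v J ∩ Goodset r t v).card
            = (Fv r v J).card := Finset.card_sdiff_add_card_inter _ _
        have hc2 : ((Fv r v J \ Goodset r t v).card : ℝ) ≤ g :=
          le_trans (by exact_mod_cast Finset.card_le_card hdiff) (hvolt v)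
        have := congrArg (fun m : ℕ => (m : ℝ)) hc
        push_cast at this
        linarith
      linarith
    -- combine
    have hsum2 : (∑ J ∈ codes r (univ \ Bal r v),
        q ^ J.card * (q * Z r q (Fv r v J)) * (((Fv r v J).card : ℝ) - g))
        = q * (Yv v - g * Zt) := by
      have hZd : Zt = ∑ J ∈ codes r (univ \ Bal r v), q ^ J.card * Z r q (Fv r v J) :=
        D1 r q v
      simp only [hYv]
      rw [hZd, mul_sub, Finset.mul_sum, Finset.mul_sum, Finset.mul_sum,
        ← Finset.sum_sub_distrib]
      exact Finset.sum_congr rfl (fun J _ => by ring)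
    calc q * (Yv v - g * Zt)
        = ∑ J ∈ codes r (univ \ Bal r v),
            q ^ J.card * (q * Z r q (Fv r v J)) * (((Fv r v J).card : ℝ) - g) := hsum2.symm
      _ ≤ ∑ J ∈ codes r (univ \ Bal r v),
            q ^ J.card * (q * Z r q (Fv r v J)) * ((Fv r v J ∩ Goodset r t v).card : ℝ) :=
          Finset.sum_le_sum hcard
      _ = ∑ u ∈ Goodset r t v, ∑ J ∈ codes r (univ \ Bal r v),
            q ^ J.card * (if u ∈ Fv r v J then q * Z r q (Fv r v J) else 0) := hswap.symm
      _ ≤ (1 + q) ^ (g : ℝ) * ∑ u ∈ Goodset r t v, q * Z r q (univ \ Bal r u) := hsum1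
  -- Step (ii): degree bound
  have stepii : ∑ v : X, ∑ u ∈ Goodset r t v, q * Z r q (univ \ Bal r u) ≤ Δ * E := by
    have hnn : ∀ u : X, 0 ≤ q * Z r q (univ \ Bal r u) := by
      intro u
      have := Z_nonneg (q := q) (r := r) hq.le (univ \ Bal r u)
      positivity
    have h1 : ∀ v : X, ∑ u ∈ Goodset r t v, q * Z r q (univ \ Bal r u)
        ≤ ∑ u ∈ Bal r v, q * Z r q (univ \ Bal r u) := by
      intro v
      apply Finset.sum_le_sum_of_subset_of_nonneg (Finset.filter_subset _ _)
      intro u _ _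
      exact hnn u
    have h2 : ∑ v : X, ∑ u ∈ Bal r v, q * Z r q (univ \ Bal r u) = Δ * E := by
      calc ∑ v : X, ∑ u ∈ Bal r v, q * Z r q (univ \ Bal r u)
          = ∑ v : X, ∑ u : X, (if dist u v ≤ r then q * Z r q (univ \ Bal r u) else 0) :=
            Finset.sum_congr rfl (fun v _ => by rw [Bal, Finset.sum_filter])
        _ = ∑ u : X, ∑ v : X, (if dist u v ≤ r then q * Z r q (univ \ Bal r u) else 0) :=
            Finset.sum_comm
        _ = ∑ u : X, Δ * (q * Z r q (univ \ Bal r u)) := by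
            apply Finset.sum_congr rfl
            intro u _
            have hcongr : ∀ v : X, (if dist u v ≤ r then q * Z r q (univ \ Bal r u) else 0)
                = (if v ∈ Bal r u then q * Z r q (univ \ Bal r u) else 0) := by
              intro v
              congr 1
              simp only [mem_Bal, eq_iff_iff]
              rw [dist_comm]
            rw [Finset.sum_congr rfl (fun v _ => hcongr v), Finset.sum_ite_mem,
              Finset.univ_inter, Finset.sum_const, nsmul_eq_mul, hBal u]
        _ = Δ * E := by
            rw [← Finset.mul_sum]
            congr 1
            rw [hE, Esum, occupancy r hr.le q]
    calc ∑ v : X, ∑ u ∈ Goodset r t v, q * Z r q (univ \ Bal r u)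
        ≤ ∑ v : X, ∑ u ∈ Bal r v, q * Z r q (univ \ Bal r u) :=
          Finset.sum_le_sum (fun v _ => h1 v)
      _ = Δ * E := h2
  -- Step (iii): per-vertex Jensen
  have logq_nonneg : 0 ≤ Real.log (1 + q) := Real.log_nonneg (by linarith)
  have stepiii : ∀ v : X, Zt * Real.exp (-Real.log (1 + q) * (Yv v / Zt))
      ≤ Z r q (univ \ Bal r v) := by
    intro v
    have hw : ∀ J ∈ codes r (univ \ Bal r v), 0 ≤ q ^ J.card * Z r q (Fv r v J) := by
      intro J _
      have := Z_nonneg (q := q) (r := r) hq.le (Fv r v J)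
      positivity
    have hsumw : ∑ J ∈ codes r (univ \ Bal r v), q ^ J.card * Z r q (Fv r v J) = Zt :=
      (D1 r q v).symm
    have hjen := jensen_exp (codes r (univ \ Bal r v))
      (fun J => q ^ J.card * Z r q (Fv r v J))
      (fun J => -Real.log (1 + q) * ((Fv r v J).card : ℝ)) hw (by rw [hsumw]; exact hZpos)
    rw [hsumw] at hjen
    have hnum : ∑ J ∈ codes r (univ \ Bal r v),
        (q ^ J.card * Z r q (Fv r v J)) * (-Real.log (1 + q) * ((Fv r v J).card : ℝ))
        = -Real.log (1 + q) * Yv v := by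
      simp only [hYv]
      rw [Finset.mul_sum]
      exact Finset.sum_congr rfl (fun J _ => by ring)
    rw [hnum] at hjen
    have hub : ∑ J ∈ codes r (univ \ Bal r v),
        (q ^ J.card * Z r q (Fv r v J)) *
          Real.exp (-Real.log (1 + q) * ((Fv r v J).card : ℝ))
        ≤ Z r q (univ \ Bal r v) := by
      rw [show Z r q (univ \ Bal r v) = ∑ J ∈ codes r (univ \ Bal r v), q ^ J.card from rfl]
      apply Finset.sum_le_sum
      intro J _
      have hZF : Z r q (Fv r v J) ≤ Real.exp (Real.log (1 + q) * ((Fv r v J).card : ℝ)) := by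
        have h1 : Z r q (Fv r v J) ≤ (1 + q) ^ (Fv r v J).card :=
          Z_le_one_add_pow r hr.le hq.le _
        have h2 : Real.exp (Real.log (1 + q) * ((Fv r v J).card : ℝ))
            = (1 + q) ^ (Fv r v J).card := by
          rw [mul_comm, Real.exp_nat_mul, Real.exp_log (by linarith)]
        rw [h2]
        exact h1
      calc (q ^ J.card * Z r q (Fv r v J)) *
            Real.exp (-Real.log (1 + q) * ((Fv r v J).card : ℝ))
          ≤ (q ^ J.card * Real.exp (Real.log (1 + q) * ((Fv r v J).card : ℝ))) *
            Real.exp (-Real.log (1 + q) * ((Fv r v J).card : ℝ)) := by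
            apply mul_le_mul_of_nonneg_right _ (Real.exp_nonneg _)
            exact mul_le_mul_of_nonneg_left hZF (pow_nonneg hq.le _)
        _ = q ^ J.card := by
            rw [mul_assoc, ← Real.exp_add]
            simp
    calc Zt * Real.exp (-Real.log (1 + q) * (Yv v / Zt))
        = Zt * Real.exp ((∑ J ∈ codes r (univ \ Bal r v),
            (q ^ J.card * Z r q (Fv r v J)) *
              (-Real.log (1 + q) * ((Fv r v J).card : ℝ))) / Zt) := by
          rw [hnum, mul_div_assoc]
      _ ≤ ∑ J ∈ codes r (univ \ Bal r v),
            (q ^ J.card * Z r q (Fv r v J)) *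
              Real.exp (-Real.log (1 + q) * ((Fv r v J).card : ℝ)) := by
          rw [hnum]
          exact hjen
      _ ≤ Z r q (univ \ Bal r v) := hub
  -- Step (iv)
  have stepiv : q * (n * Zt) *
      Real.exp (-Real.log (1 + q) * ((∑ v : X, Yv v) / (n * Zt))) ≤ E := by
    have hocc : E = ∑ v : X, q * Z r q (univ \ Bal r v) := by
      rw [hE, Esum, occupancy r hr.le q]
    have hjen2 := jensen_exp (univ : Finset X) (fun _ => Zt)
      (fun v => -Real.log (1 + q) * (Yv v / Zt)) (fun _ _ => hZpos.le)
      (by rw [Finset.sum_const, nsmul_eq_mul, Finset.card_univ]; positivity)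
    rw [Finset.sum_const, nsmul_eq_mul, Finset.card_univ] at hjen2
    have hnum2 : (∑ v : X, Zt * (-Real.log (1 + q) * (Yv v / Zt)))
        = -Real.log (1 + q) * (∑ v : X, Yv v) := by
      rw [Finset.mul_sum]
      apply Finset.sum_congr rfl
      intro v _
      rw [mul_left_comm, mul_comm Zt (Yv v / Zt), div_mul_cancel₀ _ hZpos.ne']
    rw [hnum2] at hjen2
    have harg : (-Real.log (1 + q) * ∑ v : X, Yv v) / ((Fintype.card X : ℝ) * Zt)
        = -Real.log (1 + q) * ((∑ v : X, Yv v) / (n * Zt)) := by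
      rw [hn, mul_div_assoc]
    rw [harg] at hjen2
    calc q * (n * Zt) * Real.exp (-Real.log (1 + q) * ((∑ v : X, Yv v) / (n * Zt)))
        = q * ((Fintype.card X : ℝ) * Zt *
            Real.exp (-Real.log (1 + q) * ((∑ v : X, Yv v) / (n * Zt)))) := by
          rw [hn]; ring
      _ ≤ q * ∑ v : X, Zt * Real.exp (-Real.log (1 + q) * (Yv v / Zt)) :=
          mul_le_mul_of_nonneg_left hjen2 hq.le
      _ ≤ E := by
          rw [hocc, Finset.mul_sum]
          exact Finset.sum_le_sum (fun v _ => mul_le_mul_of_nonneg_left (stepiii v) hq.le)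
  -- combine
  have hYsum : (∑ v : X, Yv v) ≤ n * g * Zt + (1 + q) ^ (g : ℝ) * (Δ * E) / q := by
    have hL : ∑ v : X, q * (Yv v - g * Zt) = q * ((∑ v : X, Yv v) - n * (g * Zt)) := by
      rw [← Finset.mul_sum]
      congr 1
      rw [Finset.sum_sub_distrib, Finset.sum_const, Finset.card_univ, nsmul_eq_mul, hn]
    have hR : ∑ v : X, (1 + q) ^ (g : ℝ) * ∑ u ∈ Goodset r t v, q * Z r q (univ \ Bal r u)
        ≤ (1 + q) ^ (g : ℝ) * (Δ * E) := by
      rw [← Finset.mul_sum]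
      exact mul_le_mul_of_nonneg_left stepii (Real.rpow_nonneg (by linarith) _)
    have hs := Finset.sum_le_sum (fun v (_ : v ∈ (univ : Finset X)) => stepi v)
    rw [hL] at hs
    have h0 : q * ((∑ v : X, Yv v) - n * (g * Zt)) ≤ (1 + q) ^ (g : ℝ) * (Δ * E) :=
      le_trans hs hR
    have h0' : ((∑ v : X, Yv v) - n * (g * Zt)) ≤ (1 + q) ^ (g : ℝ) * (Δ * E) / q := by
      rw [le_div_iff₀ hq, mul_comm]
      exact h0
    linarith
  have hexp : -(q * g) - Real.exp (q * g) * x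
      ≤ -Real.log (1 + q) * ((∑ v : X, Yv v) / (n * Zt)) := by
    have hlog_le : Real.log (1 + q) ≤ q := by
      have := Real.log_le_sub_one_of_pos (x := 1 + q) (by linarith)
      linarith
    have hpow : (1 + q) ^ (g : ℝ) ≤ Real.exp (q * g) := by
      rw [Real.rpow_def_of_pos (by linarith)]
      apply Real.exp_le_exp.mpr
      exact mul_le_mul_of_nonneg_right hlog_le hg
    have hfrac : (∑ v : X, Yv v) / (n * Zt) ≤ g + (1 + q) ^ (g : ℝ) * x / q := by
      rw [div_le_iff₀ (by positivity)]
      have hxe : x * (n * Zt) = Δ * E := by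
        rw [hx]
        field_simp
      calc (∑ v : X, Yv v) ≤ n * g * Zt + (1 + q) ^ (g : ℝ) * (Δ * E) / q := hYsum
        _ = (g + (1 + q) ^ (g : ℝ) * x / q) * (n * Zt) := by
            rw [← hxe]
            field_simp
    have h1 : Real.log (1 + q) * ((∑ v : X, Yv v) / (n * Zt))
        ≤ Real.log (1 + q) * (g + (1 + q) ^ (g : ℝ) * x / q) :=
      mul_le_mul_of_nonneg_left hfrac logq_nonneg
    have h2 : Real.log (1 + q) * (g + (1 + q) ^ (g : ℝ) * x / q)
        ≤ q * g + Real.exp (q * g) * x := by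
      have hA : Real.log (1 + q) * g ≤ q * g := mul_le_mul_of_nonneg_right hlog_le hg
      have hB : Real.log (1 + q) * ((1 + q) ^ (g : ℝ) * x / q) ≤ Real.exp (q * g) * x := by
        have hlq : Real.log (1 + q) / q ≤ 1 := by
          rw [div_le_one hq]
          exact hlog_le
        have hstep : Real.log (1 + q) * ((1 + q) ^ (g : ℝ) * x / q)
            = (Real.log (1 + q) / q) * ((1 + q) ^ (g : ℝ) * x) := by
          field_simp
        rw [hstep]
        have hbn : 0 ≤ (1 + q) ^ (g : ℝ) * x :=
          mul_nonneg (Real.rpow_nonneg (by linarith) _) hxnn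
        calc (Real.log (1 + q) / q) * ((1 + q) ^ (g : ℝ) * x)
            ≤ 1 * (Real.exp (q * g) * x) :=
              mul_le_mul hlq (mul_le_mul_of_nonneg_right hpow hxnn) hbn zero_le_one
          _ = Real.exp (q * g) * x := one_mul _
      calc Real.log (1 + q) * (g + (1 + q) ^ (g : ℝ) * x / q)
          = Real.log (1 + q) * g + Real.log (1 + q) * ((1 + q) ^ (g : ℝ) * x / q) := by ring
        _ ≤ q * g + Real.exp (q * g) * x := add_le_add hA hB
    nlinarith [h1, h2]
  calc q * Δ * Real.exp (-(q * g) - Real.exp (q * g) * x)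
      ≤ q * Δ * Real.exp (-Real.log (1 + q) * ((∑ v : X, Yv v) / (n * Zt))) := by
        apply mul_le_mul_of_nonneg_left (Real.exp_le_exp.mpr hexp) (by positivity)
    _ = (Δ / (n * Zt)) * (q * (n * Zt) *
          Real.exp (-Real.log (1 + q) * ((∑ v : X, Yv v) / (n * Zt)))) := by
        field_simp
    _ ≤ (Δ / (n * Zt)) * E := mul_le_mul_of_nonneg_left stepiv (by positivity)
    _ = x := by
        rw [hx]
        field_simp


/-- solve the self-consistency inequality -/
lemma solve {x A c1 c2 B : ℝ} (hc2 : 0 ≤ c2) (hA : 0 ≤ A)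
    (h : A * Real.exp (-c1 - c2 * x) ≤ x) (hB : B < A * Real.exp (-c1 - c2 * B)) :
    B ≤ x := by
  by_contra hlt
  push_neg at hlt
  have h1 : A * Real.exp (-c1 - c2 * B) ≤ A * Real.exp (-c1 - c2 * x) := by
    apply mul_le_mul_of_nonneg_left _ hA
    apply Real.exp_le_exp.mpr
    nlinarith
  linarith

/-- extraction of a large code -/
lemma exists_code_ge (r : ℝ) {q : ℝ} (hq : 0 < q) :
    ∃ C : Finset X, code r C ∧
      Esum r q X / Z r q (univ : Finset X) ≤ (C.card : ℝ) := by
  obtain ⟨C, hC, hmax⟩ := Finset.exists_max_image (codes r (univ : Finset X))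
    (fun C => C.card) ⟨∅, by simp [mem_codes, code_empty]⟩
  refine ⟨C, (mem_codes.mp hC).2, ?_⟩
  rw [div_le_iff₀ (Z_pos hq.le _)]
  calc Esum r q X = ∑ D ∈ codes r (univ : Finset X), q ^ D.card * (D.card : ℝ) := rfl
    _ ≤ ∑ D ∈ codes r (univ : Finset X), q ^ D.card * (C.card : ℝ) := by
        apply Finset.sum_le_sum
        intro D hD
        exact mul_le_mul_of_nonneg_left (by exact_mod_cast hmax D hD) (pow_nonneg hq.le _)
    _ = (C.card : ℝ) * Z r q (univ : Finset X) := by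
        rw [Z, ← Finset.sum_mul, mul_comm]

/-- counting lower bound via convexity -/
lemma count_lower (r : ℝ) {q : ℝ} (hq : 0 < q) :
    Real.exp ((Esum r q X / Z r q (univ : Finset X)) * Real.log (1 / q))
      ≤ Z r 1 (univ : Finset X) := by
  have hZpos := Z_pos (r := r) hq.le (univ : Finset X)
  have hjen := jensen_exp (codes r (univ : Finset X)) (fun C => q ^ C.card)
    (fun C => (C.card : ℝ) * Real.log (1 / q)) (fun C _ => pow_nonneg hq.le _) hZpos
  have hnum : (∑ C ∈ codes r (univ : Finset X),
      q ^ C.card * ((C.card : ℝ) * Real.log (1 / q)))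
      = Esum r q X * Real.log (1 / q) := by
    rw [Esum, Finset.sum_mul]
    exact Finset.sum_congr rfl (fun C _ => by ring)
  rw [hnum] at hjen
  have hrhs : (∑ C ∈ codes r (univ : Finset X),
      q ^ C.card * Real.exp ((C.card : ℝ) * Real.log (1 / q)))
      = Z r 1 (univ : Finset X) := by
    rw [Z]
    apply Finset.sum_congr rfl
    intro C _
    rw [Real.exp_nat_mul, Real.exp_log (by positivity), ← mul_pow, mul_one_div,
      div_self hq.ne']
  rw [hrhs] at hjen
  calc Real.exp ((Esum r q X / Z r q (univ : Finset X)) * Real.log (1 / q))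
      = Real.exp (Esum r q X * Real.log (1 / q) / Z r q (univ : Finset X)) := by
        rw [div_mul_eq_mul_div]
    _ ≤ Z r q (univ : Finset X) *
        Real.exp (Esum r q X * Real.log (1 / q) / Z r q (univ : Finset X)) := by
        nlinarith [Real.exp_pos (Esum r q X * Real.log (1 / q) / Z r q (univ : Finset X)),
          one_le_Z (r := r) hq.le (univ : Finset X)]
    _ ≤ Z r 1 (univ : Finset X) := hjen

end Stmt2Aux


set_option maxHeartbeats 2000000 in
open Stmt2Aux Finset in
/-- Improvement on the sphere-covering bound: in a homogeneous finite metric space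
with exponential growth and small intersection of balls, there is a large code,
and the number of codes is large. -/
theorem stmt2 (δ : ℝ) (hδ0 : 0 < δ) (hδ : δ < 1 / 8) :
    ∃ K₀ > (0 : ℝ), ∀ K : ℝ, K₀ ≤ K →
      ∀ (X : Type) [MetricSpace X] [Fintype X] (r : ℝ), 0 < r →
      ∀ vol : ℝ → ℕ,
      -- (P1) homogeneity: all balls of radius s have the same cardinality vol(s)
      (∀ (s : ℝ) (a : X), {x : X | dist x a ≤ s}.ncard = vol s) →
      ∀ t : ℝ, 0 < t → t < r →
      -- (P2) exponential growth
      ((vol (r - t) : ℝ) ≤ Real.exp (-K) * (vol r : ℝ)) →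
      -- (P3) small intersection volume
      (∀ a b : X, r - t < dist a b → dist a b ≤ r →
        ({x : X | dist x a ≤ r ∧ dist x b ≤ r}.ncard : ℝ) ≤
          Real.exp (-K) * (vol r : ℝ)) →
      (∃ C : Finset X, (∀ c ∈ C, ∀ c' ∈ C, c ≠ c' → r < dist c c') ∧
          (1 - δ) * K * (Fintype.card X : ℝ) / (vol r : ℝ) ≤ (C.card : ℝ)) ∧
        Real.exp ((1 / 8 - δ) * K ^ 2 * (Fintype.card X : ℝ) / (vol r : ℝ)) ≤
          (Nat.card {C : Finset X // ∀ c ∈ C, ∀ c' ∈ C, c ≠ c' → r < dist c c'} : ℝ) := by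
  classical
  set ε : ℝ := δ / 8 with hε
  have hε0 : 0 < ε := by rw [hε]; linarith
  have hεsmall : ε ≤ 1 / 64 := by rw [hε]; linarith
  have hexpε : Real.exp ε ≤ 1 + 2 * ε := by
    have h1 : 1 - ε ≤ Real.exp (-ε) := by
      have := Real.add_one_le_exp (-ε)
      linarith
    have h2 : Real.exp ε * Real.exp (-ε) = 1 := by
      rw [← Real.exp_add]
      simp
    nlinarith [Real.exp_pos ε, Real.exp_pos (-ε)]
  have hkey : Real.exp ε * (1 - δ) ≤ 1 - δ / 2 := by nlinarith
  refine ⟨max (64 * Real.exp ε / (ε * δ ^ 2)) (2 * Real.log (1 / ε)) + 1, ?_, ?_⟩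
  · have h1 : (0:ℝ) < 64 * Real.exp ε / (ε * δ ^ 2) := by positivity
    have := le_max_left (64 * Real.exp ε / (ε * δ ^ 2)) (2 * Real.log (1 / ε))
    linarith
  intro K hK X _ _ r hr vol hP1 t ht htr hP2 hP3
  have hK1 : 64 * Real.exp ε / (ε * δ ^ 2) < K := by
    have := le_max_left (64 * Real.exp ε / (ε * δ ^ 2)) (2 * Real.log (1 / ε))
    linarith
  have hK2 : 2 * Real.log (1 / ε) < K := by
    have := le_max_right (64 * Real.exp ε / (ε * δ ^ 2)) (2 * Real.log (1 / ε))
    linarith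
  have hKpos : 0 < K := by
    have : (0:ℝ) < 64 * Real.exp ε / (ε * δ ^ 2) := by positivity
    linarith
  have hF2 : Real.exp (-(K / 2)) ≤ ε := by
    have h1 : Real.log (1 / ε) < K / 2 := by linarith
    calc Real.exp (-(K / 2)) ≤ Real.exp (-(Real.log (1 / ε))) := by
          apply Real.exp_le_exp.mpr
          linarith
      _ = ε := by
          rw [Real.exp_neg, Real.exp_log (by positivity), one_div, inv_inv]
  have hF1 : K < ε * Real.exp (δ * K / 4) / Real.exp ε := by
    have h1 : (1 + δ * K / 8) ^ 2 ≤ Real.exp (δ * K / 4) := by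
      have h2 := Real.add_one_le_exp (δ * K / 8)
      have h3 : (1 + δ * K / 8) ^ 2 ≤ (Real.exp (δ * K / 8)) ^ 2 := by
        have h4 : 0 ≤ 1 + δ * K / 8 := by positivity
        nlinarith
      have h5 : (Real.exp (δ * K / 8)) ^ 2 = Real.exp (δ * K / 4) := by
        rw [sq, ← Real.exp_add]
        ring_nf
      linarith
    rw [lt_div_iff₀ (Real.exp_pos ε)]
    have h6 : 64 * Real.exp ε < K * (ε * δ ^ 2) := by
      rw [div_lt_iff₀ (by positivity)] at hK1
      exact hK1
    nlinarith [Real.exp_pos ε, hε0.le, hKpos.le, sq_nonneg (δ * K)]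
  rcases isEmpty_or_nonempty X with hXe | hXne
  · -- empty case
    have hcard0 : Fintype.card X = 0 := Fintype.card_eq_zero
    constructor
    · refine ⟨∅, by simp, ?_⟩
      rw [hcard0]
      simp
    · rw [hcard0]
      simp only [Nat.cast_zero, mul_zero, zero_div, Real.exp_zero]
      have hne : Nonempty {C : Finset X // ∀ c ∈ C, ∀ c' ∈ C, c ≠ c' → r < dist c c'} :=
        ⟨⟨∅, by simp⟩⟩
      have hpos : 0 < Nat.card {C : Finset X // ∀ c ∈ C, ∀ c' ∈ C, c ≠ c' → r < dist c c'} :=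
        Nat.card_pos
      exact_mod_cast hpos
  -- nonempty case
  have hb : ∀ (s : ℝ) (v : X), ((Bal s v).card : ℕ) = vol s := by
    intro s v
    have h1 : {x : X | dist x v ≤ s} = ↑(Bal s v) := by
      ext x
      simp [mem_Bal]
    rw [← hP1 s v, h1, Set.ncard_coe_finset]
  set Δ : ℝ := (vol r : ℝ) with hΔdef
  have hΔK : Real.exp K ≤ Δ := by
    obtain ⟨v⟩ := hXne
    have h1 : (1 : ℝ) ≤ (vol (r - t) : ℝ) := by
      have hv : v ∈ Bal (r - t) v := by
        rw [mem_Bal]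
        simp only [dist_self]
        linarith
      have h2 : 1 ≤ (Bal (r - t) v).card := Finset.card_pos.mpr ⟨v, hv⟩
      calc (1:ℝ) ≤ ((Bal (r - t) v).card : ℝ) := by exact_mod_cast h2
        _ = (vol (r - t) : ℝ) := by exact_mod_cast hb (r - t) v
    have h3 : (1 : ℝ) ≤ Real.exp (-K) * Δ := le_trans h1 hP2
    have h4 : Real.exp K * (Real.exp (-K) * Δ) = Δ := by
      rw [← mul_assoc, ← Real.exp_add]
      simp
    nlinarith [Real.exp_pos K]
  have hΔpos : 0 < Δ := lt_of_lt_of_le (Real.exp_pos K) hΔK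
  set g : ℝ := Real.exp (-K) * Δ with hgdef
  have hg0 : 0 ≤ g := by positivity
  have hBal : ∀ v : X, ((Bal r v).card : ℝ) = Δ := by
    intro v
    rw [hΔdef]
    exact_mod_cast hb r v
  have hvolt : ∀ v : X, ((Bal (r - t) v).card : ℝ) ≤ g := by
    intro v
    have := hb (r - t) v
    calc ((Bal (r - t) v).card : ℝ) = (vol (r - t) : ℝ) := by exact_mod_cast this
      _ ≤ g := hP2
  have hP3' : ∀ u v : X, r - t < dist u v → dist u v ≤ r →
      ((Bal r u ∩ Bal r v).card : ℝ) ≤ g := by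
    intro u v h1 h2
    have h3 := hP3 u v h1 h2
    have hset : {x : X | dist x u ≤ r ∧ dist x v ≤ r} = ↑(Bal r u ∩ Bal r v) := by
      ext x
      simp [mem_Bal]
    rw [hset, Set.ncard_coe_finset] at h3
    exact h3
  set n : ℝ := (Fintype.card X : ℝ) with hn
  have hnpos : (0:ℝ) < n := by
    rw [hn]
    exact_mod_cast Fintype.card_pos
  constructor
  · -- existence of a large code
    set q1 : ℝ := ε * Real.exp K / Δ with hq1def
    have hq1 : 0 < q1 := by positivity
    have hq1Δ : q1 * Δ = ε * Real.exp K := by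
      rw [hq1def, div_mul_cancel₀ _ hΔpos.ne']
    have hq1g : q1 * g = ε := by
      have h1 : q1 * g = ε * (Real.exp K * Real.exp (-K)) * (Δ * Δ⁻¹) := by
        rw [hq1def, hgdef]
        ring
      rw [h1, mul_inv_cancel₀ hΔpos.ne', ← Real.exp_add, add_neg_cancel, Real.exp_zero,
        mul_one, mul_one]
    have hcore1 := core (X := X) r t q1 g hr hq1 hg0 Δ hBal hvolt hP3'
    rw [hq1g, hq1Δ] at hcore1
    set x1 : ℝ := Δ * Esum r q1 X / ((Fintype.card X : ℝ) * Z r q1 (univ : Finset X)) with hx1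
    have hZ1pos : 0 < Z r q1 (univ : Finset X) := Z_pos hq1.le _
    have hE1nn : 0 ≤ Esum r q1 X := Esum_nonneg hq1.le
    have happ1 : (1 - δ) * K ≤ x1 := by
      apply solve (Real.exp_nonneg ε) (by positivity) hcore1
      have hBnn : 0 ≤ (1 - δ) * K := by nlinarith
      have hexpo : δ * K / 4 - ε ≤ K - ε - Real.exp ε * ((1 - δ) * K) := by
        have : Real.exp ε * ((1 - δ) * K) ≤ (1 - δ / 2) * K := by
          rw [← mul_assoc]
          exact mul_le_mul_of_nonneg_right hkey hKpos.le
        nlinarith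
      calc (1 - δ) * K < ε * Real.exp (δ * K / 4) / Real.exp ε := by
            have : (1 - δ) * K ≤ K := by nlinarith
            linarith [hF1]
        _ = ε * Real.exp (δ * K / 4 - ε) := by
            rw [Real.exp_sub]
            ring
        _ ≤ ε * Real.exp (K - ε - Real.exp ε * ((1 - δ) * K)) := by
            apply mul_le_mul_of_nonneg_left _ hε0.le
            exact Real.exp_le_exp.mpr hexpo
        _ = ε * Real.exp K * Real.exp (-ε - Real.exp ε * ((1 - δ) * K)) := by
            rw [mul_assoc, ← Real.exp_add]
            congr 2
            ring
    obtain ⟨C, hCcode, hCcard⟩ := exists_code_ge (X := X) r hq1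
    refine ⟨C, hCcode, ?_⟩
    have hEZ : Esum r q1 X / Z r q1 (univ : Finset X) = x1 * n / Δ := by
      rw [hx1, hn]
      field_simp
    calc (1 - δ) * K * n / Δ ≤ x1 * n / Δ := by gcongr
      _ = Esum r q1 X / Z r q1 (univ : Finset X) := hEZ.symm
      _ ≤ (C.card : ℝ) := hCcard
  · -- counting part
    set q2 : ℝ := Real.exp (K / 2) / Δ with hq2def
    have hq2 : 0 < q2 := by positivity
    have hq2Δ : q2 * Δ = Real.exp (K / 2) := by
      rw [hq2def, div_mul_cancel₀ _ hΔpos.ne']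
    have hq2g : q2 * g = Real.exp (-(K / 2)) := by
      have h1 : q2 * g = Real.exp (K / 2) * Real.exp (-K) * (Δ * Δ⁻¹) := by
        rw [hq2def, hgdef]
        ring
      rw [h1, mul_inv_cancel₀ hΔpos.ne', mul_one, ← Real.exp_add]
      ring_nf
    have hcore2 := core (X := X) r t q2 g hr hq2 hg0 Δ hBal hvolt hP3'
    rw [hq2g, hq2Δ] at hcore2
    set x2 : ℝ := Δ * Esum r q2 X / ((Fintype.card X : ℝ) * Z r q2 (univ : Finset X)) with hx2
    have hZ2pos : 0 < Z r q2 (univ : Finset X) := Z_pos hq2.le _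
    have hE2nn : 0 ≤ Esum r q2 X := Esum_nonneg hq2.le
    have hB2nn : 0 ≤ (1 - δ) * K / 2 := by nlinarith
    have happ2 : (1 - δ) * K / 2 ≤ x2 := by
      apply solve (Real.exp_nonneg _) (Real.exp_nonneg _) hcore2
      have hc2 : Real.exp (Real.exp (-(K / 2))) ≤ Real.exp ε := Real.exp_le_exp.mpr hF2
      have hexpo : δ * K / 4 - ε ≤ K / 2 - Real.exp (-(K / 2))
          - Real.exp (Real.exp (-(K / 2))) * ((1 - δ) * K / 2) := by
        have h1 : Real.exp (Real.exp (-(K / 2))) * ((1 - δ) * K / 2)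
            ≤ Real.exp ε * ((1 - δ) * K / 2) := mul_le_mul_of_nonneg_right hc2 hB2nn
        have h2 : Real.exp ε * ((1 - δ) * K / 2) ≤ (1 - δ / 2) * (K / 2) := by
          have h3 := mul_le_mul_of_nonneg_right hkey (by linarith : (0:ℝ) ≤ K / 2)
          nlinarith
        have h3 : Real.exp (-(K / 2)) ≤ ε := hF2
        nlinarith
      calc (1 - δ) * K / 2 < ε * Real.exp (δ * K / 4) / Real.exp ε := by
            nlinarith [hF1]
        _ ≤ Real.exp (δ * K / 4 - ε) := by
            rw [Real.exp_sub, mul_div_assoc]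
            have h4 : ε * (Real.exp (δ * K / 4) / Real.exp ε)
                ≤ 1 * (Real.exp (δ * K / 4) / Real.exp ε) :=
              mul_le_mul_of_nonneg_right (by linarith) (by positivity)
            linarith
        _ ≤ Real.exp (K / 2 - Real.exp (-(K / 2))
              - Real.exp (Real.exp (-(K / 2))) * ((1 - δ) * K / 2)) :=
            Real.exp_le_exp.mpr hexpo
        _ = Real.exp (K / 2) * Real.exp (-Real.exp (-(K / 2))
              - Real.exp (Real.exp (-(K / 2))) * ((1 - δ) * K / 2)) := by
            rw [← Real.exp_add]
            ring_nf
    have hx2nn : 0 ≤ x2 := le_trans hB2nn happ2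
    have hEZ2 : Esum r q2 X / Z r q2 (univ : Finset X) = x2 * n / Δ := by
      rw [hx2, hn]
      field_simp
    have hlogq2 : K / 2 ≤ Real.log (1 / q2) := by
      have h0 : (1 : ℝ) / q2 = Δ / Real.exp (K / 2) := by
        rw [hq2def]
        field_simp
      rw [h0, Real.log_div hΔpos.ne' (Real.exp_ne_zero _), Real.log_exp]
      have h1 : K ≤ Real.log Δ := by
        rw [Real.le_log_iff_exp_le hΔpos]
        exact hΔK
      linarith
    have hcount := count_lower (X := X) (r := r) (q := q2) hq2
    have hZ1card : Z r 1 (univ : Finset X)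
        = ((Nat.card {C : Finset X // ∀ c ∈ C, ∀ c' ∈ C, c ≠ c' → r < dist c c'} : ℕ) : ℝ) := by
      have h1 : Z r 1 (univ : Finset X) = ((codes r (univ : Finset X)).card : ℝ) := by
        rw [Z]
        simp
      have hiff : ∀ C : Finset X, (C ∈ codes r (univ : Finset X))
          ↔ (∀ c ∈ C, ∀ c' ∈ C, c ≠ c' → r < dist c c') := by
        intro C
        rw [mem_codes]
        have : code r C ↔ (∀ c ∈ C, ∀ c' ∈ C, c ≠ c' → r < dist c c') := Iff.rfl
        simp [this, Finset.subset_univ]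
      have h2 : Nat.card {C : Finset X // ∀ c ∈ C, ∀ c' ∈ C, c ≠ c' → r < dist c c'}
          = (codes r (univ : Finset X)).card := by
        calc Nat.card {C : Finset X // ∀ c ∈ C, ∀ c' ∈ C, c ≠ c' → r < dist c c'}
            = Nat.card {C : Finset X // C ∈ codes r (univ : Finset X)} :=
              Nat.card_congr (Equiv.subtypeEquivRight (fun C => (hiff C).symm))
          _ = (codes r (univ : Finset X)).card := Nat.card_eq_finsetCard _
      rw [h1, h2]
    calc Real.exp ((1 / 8 - δ) * K ^ 2 * n / Δ)
        ≤ Real.exp ((Esum r q2 X / Z r q2 (univ : Finset X)) * Real.log (1 / q2)) := by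
          apply Real.exp_le_exp.mpr
          have hq1' : (1 / 8 - δ) * K ^ 2 * n / Δ ≤ ((1 - δ) * K / 2) * (K / 2) * n / Δ := by
            have h5 : (1 / 8 - δ) * K ^ 2 ≤ ((1 - δ) * K / 2) * (K / 2) := by nlinarith
            gcongr
          have hq2' : ((1 - δ) * K / 2) * (K / 2) * n / Δ
              ≤ (x2 * n / Δ) * Real.log (1 / q2) := by
            calc ((1 - δ) * K / 2) * (K / 2) * n / Δ
                = (((1 - δ) * K / 2) * n / Δ) * (K / 2) := by ring
              _ ≤ (x2 * n / Δ) * Real.log (1 / q2) := by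
                  apply mul_le_mul ?_ hlogq2 (by linarith) ?_
                  · gcongr
                  · positivity
          rw [hEZ2]
          linarith
      _ ≤ Z r 1 (univ : Finset X) := hcount
      _ = _ := hZ1card
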